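/- Let k be a field, X a scheme locally of finite type over k, and U ⊆ X an open subset. If a section s ∈ O_X(U) has zero germ in the stalk O_{X,x} for every point x ∈ U whose residue field κ(x) is a finite extension of k, then s = 0. Equivalently, the canonical map O_X(U) → ∏_{x ∈ U, [κ(x):k] < ∞} O_{X,x} given by taking germs is injective. -/

import Mathlib

open AlgebraicGeometry CategoryTheory TopCat Opposite

universe u

/-- If `S` is a localization of `R` at a maximal ideal `J`, then the composite
`R → S → S/m` is surjective. -/
lemma aux_residue_algebraMap_surjective {R S : Type*} [CommRing R] [CommRing S]
    [IsLocalRing S] [Algebra R S] (J : Ideal R) [hJ : J.IsMaximal]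
    [IsLocalization.AtPrime S J] :
    Function.Surjective (fun a : R => IsLocalRing.residue S (algebraMap R S a)) := by
  intro q
  obtain ⟨t, rfl⟩ := IsLocalRing.residue_surjective (R := S) q
  obtain ⟨⟨a, s⟩, e⟩ := IsLocalization.surj (M := J.primeCompl) (S := S) t
  obtain ⟨b, c, hc, hbc⟩ := hJ.exists_inv (x := s.1) s.2
  refine ⟨b * a, ?_⟩
  show IsLocalRing.residue S (algebraMap R S (b * a)) = IsLocalRing.residue S t
  have hcz : IsLocalRing.residue S (algebraMap R S c) = 0 := by
    have : algebraMap R S c ∈ IsLocalRing.maximalIdeal S :=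
      (IsLocalization.AtPrime.to_map_mem_maximal_iff S J c).mpr hc
    exact Ideal.Quotient.eq_zero_iff_mem.mpr this
  have : t = algebraMap R S (b * a) + t * algebraMap R S c := by
    have h1 : algebraMap R S (b * s.1 + c) = 1 := by rw [hbc, map_one]
    calc t = t * algebraMap R S (b * s.1 + c) := by rw [h1, mul_one]
    _ = algebraMap R S b * (t * algebraMap R S s.1) + t * algebraMap R S c := by ring_nf; rw [map_add, map_mul]; ring
    _ = algebraMap R S (b * a) + t * algebraMap R S c := by rw [e, map_mul]
  rw [this, map_add, map_mul (IsLocalRing.residue S) t, hcz, mul_zero, add_zero]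


/-- On a scheme locally of finite type over a field `k`, a section over an open set `U` whose
germ vanishes at every point of `U` with residue field finite over `k` is zero. -/
theorem section_eq_zero_of_germ_eq_zero {k : Type u} [Field k] (X : Scheme.{u})
    (f : X ⟶ Spec (CommRingCat.of k)) [LocallyOfFiniteType f]
    (U : X.Opens) (s : Γ(X, U))
    (h : ∀ (x : X) (hx : x ∈ U),
      (letI : Algebra k (X.residueField x) :=
        (StructureSheaf.toStalk k (f.base x) ≫ f.stalkMap x ≫ X.residue x).hom.toAlgebra
       FiniteDimensional k (X.residueField x)) →
      X.presheaf.germ U x hx s = 0) :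
    s = 0 := by
  -- It suffices to show all germs vanish.
  apply TopCat.Presheaf.section_ext X.sheaf U s 0
  intro x hx
  rw [map_zero]
  -- Choose an affine open `W ≤ U` containing `x`.
  obtain ⟨W, hWaff, hxW, hWU⟩ : ∃ W : X.Opens, IsAffineOpen W ∧ x ∈ W ∧ W ≤ U := by
    obtain ⟨W, hW, hxW, hWU⟩ :=
      TopologicalSpace.Opens.isBasis_iff_nbhd.mp X.isBasis_affineOpens hx
    exact ⟨W, hW, hxW, hWU⟩
  set sW : Γ(X, W) := X.presheaf.map (homOfLE hWU).op s with hsWdef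
  suffices hsW : sW = 0 by
    show X.presheaf.germ U x hx s = 0
    have h2 : X.presheaf.germ W x hxW sW = 0 := by rw [hsW]; exact map_zero _
    exact (X.presheaf.germ_res_apply (homOfLE hWU) x hxW s).symm.trans h2
  -- `Γ(X, W)` is a finite type `k`-algebra.
  have eW : W ≤ f ⁻¹ᵁ ⊤ := fun a _ => trivial
  have hft : RingHom.FiniteType (f.appLE ⊤ W eW).hom :=
    LocallyOfFiniteType.finiteType_appLE f
      (isAffineOpen_top _) hWaff eW
  set φ0 : CommRingCat.of k ⟶ Γ(X, W) :=
    (Scheme.ΓSpecIso (CommRingCat.of k)).inv ≫ f.appLE ⊤ W eW with hφ0def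
  have hφ0 : RingHom.FiniteType φ0.hom :=
    hft.comp (RingHom.FiniteType.of_surjective _
      (ConcreteCategory.bijective_of_isIso (Scheme.ΓSpecIso (CommRingCat.of k)).inv).2)
  letI algΓ : Algebra k Γ(X, W) := φ0.hom.toAlgebra
  haveI : Algebra.FiniteType k Γ(X, W) := hφ0
  haveI : IsJacobsonRing Γ(X, W) := isJacobsonRing_of_finiteType (A := k)
  -- check at every maximal ideal
  apply eq_zero_of_localization
  intro J hJ
  let p : PrimeSpectrum Γ(X, W) := ⟨J, hJ.isPrime⟩
  set z := hWaff.fromSpec.base p with hzdef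
  have hzW : z ∈ W := by
    have hmem : z ∈ Set.range hWaff.fromSpec.base := ⟨p, rfl⟩
    rwa [hWaff.range_fromSpec] at hmem
  haveI hloc : @IsLocalization.AtPrime (R := Γ(X, W)) (S := X.presheaf.stalk z) _ _
    (X.presheaf.algebra_section_stalk ⟨z, hzW⟩) J _ := hWaff.isLocalization_stalk' p hzW
  letI : Algebra Γ(X, W) (X.presheaf.stalk z) :=
    X.presheaf.algebra_section_stalk (⟨z, hzW⟩ : W)
  -- the algebra map `Γ(X, W) → stalk z` is the germ map
  -- the key finiteness statement
  have hfd : (letI : Algebra k (X.residueField z) :=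
      (StructureSheaf.toStalk k (f.base z) ≫ f.stalkMap z ≫ X.residue z).hom.toAlgebra
      FiniteDimensional k (X.residueField z)) := by
    have hfactor : (StructureSheaf.toStalk k (f.base z) ≫ f.stalkMap z ≫ X.residue z) =
        φ0 ≫ X.presheaf.germ W z hzW ≫ X.residue z := by
      rw [hφ0def, Scheme.Hom.appLE]
      rw [Category.assoc, Category.assoc]
      rw [TopCat.Presheaf.germ_res'_assoc X.presheaf (homOfLE eW).op z hzW]
      rw [← Scheme.Hom.germ_stalkMap_assoc f ⊤ z trivial]
      rw [← StructureSheaf.algebraMap_germ (R := k) ⊤ (f.base z) trivial]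
      rfl
    show (letI : Algebra k (X.residueField z) :=
      (StructureSheaf.toStalk k (f.base z) ≫ f.stalkMap z ≫ X.residue z).hom.toAlgebra
      FiniteDimensional k (X.residueField z))
    rw [hfactor]
    letI : Algebra k (X.residueField z) :=
      (φ0 ≫ X.presheaf.germ W z hzW ≫ X.residue z).hom.toAlgebra
    have hsurj : Function.Surjective (X.presheaf.germ W z hzW ≫ X.residue z) :=
      aux_residue_algebraMap_surjective (S := X.presheaf.stalk z) J
    have hφ : RingHom.FiniteType
        ((φ0 ≫ X.presheaf.germ W z hzW ≫ X.residue z : CommRingCat.of k ⟶ _) :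
          CommRingCat.of k ⟶ X.residueField z).hom :=
      RingHom.FiniteType.comp (RingHom.FiniteType.of_surjective _ hsurj) hφ0
    haveI : Algebra.FiniteType k (X.residueField z) := hφ
    exact finite_of_finite_type_of_isJacobsonRing k (X.residueField z)
  have hz : X.presheaf.germ U z (hWU hzW) s = 0 := h z (hWU hzW) hfd
  -- transfer germ vanishing to the localization
  have hstalk : algebraMap Γ(X, W) (X.presheaf.stalk z) sW = 0 := by
    show X.presheaf.germ W z hzW sW = 0
    rw [hsWdef, X.presheaf.germ_res_apply (homOfLE hWU) z hzW s]
    exact hz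
  have e := IsLocalization.algEquiv J.primeCompl
    (Localization.AtPrime J) (X.presheaf.stalk z)
  apply e.injective
  rw [map_zero, e.commutes, hstalk]
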